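/- Let S_0, ..., S_{k-1} be additive subgroups of F_{q^h}, let a_1, ..., a_{q^h} enumerate the elements of F_{q^h}, and let C = {(f(a_1), ..., f(a_{q^h}), c_{k-1}) : f(x) = Σ_{i=0}^{k-1} c_i x^i, c_i ∈ S_i} ⊆ (F_{q^h})^{q^h + 1}. Then C is an additive code of size Π|S_i| with minimum distance at least n - (k-1) where n = q^h + 1; moreover if q^{(k-1)h} < Π_{i=0}^{k-1}|S_i| < q^{kh} then C attains the fractional Singleton bound ⌈r/h⌉ = n - d + 1 (where |C| = q^r). -/

import Mathlib

open Polynomial in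
lemma rs_root_bound {K : Type} [Field K] [Fintype K] [DecidableEq K] {k : ℕ}
    (c : Fin k → K) (m : ℕ) (hm : ∀ i : Fin k, m < (i : ℕ) → c i = 0)
    (hc : c ≠ 0) :
    (Finset.univ.filter fun x : K => ∑ i : Fin k, c i * x ^ (i : ℕ) = 0).card ≤ m := by
  classical
  set p : Polynomial K := ∑ i : Fin k, Polynomial.monomial (i : ℕ) (c i) with hp
  have heval : ∀ x : K, p.eval x = ∑ i : Fin k, c i * x ^ (i : ℕ) := by
    intro x
    simp [hp, Polynomial.eval_finset_sum]
  have hpne : p ≠ 0 := by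
    obtain ⟨i, hi⟩ : ∃ i, c i ≠ 0 := by
      by_contra hcon; push_neg at hcon; exact hc (funext hcon)
    intro h0
    apply hi
    have : p.coeff (i : ℕ) = c i := by
      simp [hp, Polynomial.finset_sum_coeff, Polynomial.coeff_monomial, Fin.val_eq_val]
    rw [← this, h0, Polynomial.coeff_zero]
  have hdeg : p.natDegree ≤ m := by
    apply Polynomial.natDegree_sum_le_of_forall_le
    intro i _
    by_cases hi : (i : ℕ) ≤ m
    · exact le_trans (Polynomial.natDegree_monomial_le _) hi
    · rw [hm i (by omega), Polynomial.monomial_zero_right]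
      simp
  calc (Finset.univ.filter fun x : K => ∑ i : Fin k, c i * x ^ (i : ℕ) = 0).card
      ≤ p.roots.toFinset.card := by
        apply Finset.card_le_card
        intro x hx
        simp only [Finset.mem_filter, Finset.mem_univ, true_and] at hx
        rw [Multiset.mem_toFinset, Polynomial.mem_roots hpne]
        exact (heval x).trans hx
    _ ≤ Multiset.card p.roots := Multiset.toFinset_card_le _
    _ ≤ p.natDegree := p.card_roots'
    _ ≤ m := hdeg


/-- Additive Reed–Solomon-type codes: if `S_0, …, S_{k-1}` are additive subgroups of `F_{q^h}`,
and `C = {(f(a_1),…,f(a_{q^h}),c_{k-1}) : f(x) = ∑ c_i x^i, c_i ∈ S_i}`, then `C` is additive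
of size `∏ |S_i|`, has minimum distance at least `n - (k-1)` with `n = q^h + 1`, and when
`q^{(k-1)h} < ∏|S_i| = q^r < q^{kh}` it attains the fractional Singleton bound
`⌈r/h⌉ = n - d + 1`. -/
theorem additive_reed_solomon_fractional_MDS
    (q h k r : ℕ) (Fq K : Type) [Field Fq] [Fintype Fq] [Field K] [Fintype K]
    [DecidableEq K] [Algebra Fq K]
    (hq : Fintype.card Fq = q) (hK : Fintype.card K = q ^ h)
    (hk1 : 1 ≤ k) (hk2 : k ≤ q ^ h)
    (S : Fin k → AddSubgroup K)
    (e : Fin (q ^ h) ≃ K)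
    (C : Set (Fin (q ^ h + 1) → K))
    (hC : C = {v | ∃ c : Fin k → K, (∀ i, c i ∈ S i) ∧
      (∀ j : Fin (q ^ h), v (Fin.castSucc j) = ∑ i : Fin k, c i * (e j) ^ (i : ℕ)) ∧
      v (Fin.last (q ^ h)) = c ⟨k - 1, by omega⟩})
    (hr : (∏ i, Nat.card (S i)) = q ^ r) :
    (∀ u ∈ C, ∀ v ∈ C, u + v ∈ C) ∧
    Nat.card C = ∏ i, Nat.card (S i) ∧
    (∀ v ∈ C, v ≠ 0 → (q ^ h + 1) - (k - 1) ≤ hammingNorm v) ∧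
    (q ^ ((k - 1) * h) < q ^ r → q ^ r < q ^ (k * h) →
      ∀ d : ℕ, (∀ v ∈ C, v ≠ 0 → d ≤ hammingNorm v) →
        (∃ v ∈ C, v ≠ 0 ∧ hammingNorm v = d) →
        (⌈(r : ℚ) / (h : ℚ)⌉ : ℤ) = (q ^ h + 1 : ℤ) - (d : ℤ) + 1) := by
  classical
  have hq2 : 2 ≤ q := by rw [← hq]; exact Fintype.one_lt_card
  have hK2 : 2 ≤ q ^ h := by rw [← hK]; exact Fintype.one_lt_card
  have hh : 1 ≤ h := by
    rcases Nat.eq_zero_or_pos h with h0 | h1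
    · subst h0; simp at hK2
    · exact h1
  -- additivity
  have hadd : ∀ u ∈ C, ∀ v ∈ C, u + v ∈ C := by
    rw [hC]
    rintro u ⟨c, hcS, hcv, hcl⟩ v ⟨c', hc'S, hc'v, hc'l⟩
    exact ⟨c + c', fun i => (S i).add_mem (hcS i) (hc'S i),
      fun j => by simp [hcv j, hc'v j, add_mul, Finset.sum_add_distrib],
      by simp [hcl, hc'l]⟩
  -- closure under subtraction
  have hsubc : ∀ u ∈ C, ∀ v ∈ C, u - v ∈ C := by
    rw [hC]
    rintro u ⟨c, hcS, hcv, hcl⟩ v ⟨c', hc'S, hc'v, hc'l⟩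
    exact ⟨c - c', fun i => (S i).sub_mem (hcS i) (hc'S i),
      fun j => by simp [hcv j, hc'v j, sub_mul, Finset.sum_sub_distrib],
      by simp [hcl, hc'l]⟩
  -- cardinality
  let Φ : (∀ i : Fin k, S i) → (Fin (q ^ h + 1) → K) :=
    fun c => Fin.snoc (fun j => ∑ i : Fin k, (c i : K) * (e j) ^ (i : ℕ))
      (c ⟨k - 1, by omega⟩ : K)
  have hrange : C = Set.range Φ := by
    rw [hC]
    ext v
    constructor
    · rintro ⟨c, hcS, hcv, hcl⟩
      refine ⟨fun i => ⟨c i, hcS i⟩, ?_⟩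
      funext j
      refine Fin.lastCases ?_ (fun j' => ?_) j
      · simp [Φ, Fin.snoc_last, hcl]
      · simp [Φ, Fin.snoc_castSucc, hcv j']
    · rintro ⟨c, rfl⟩
      exact ⟨fun i => (c i : K), fun i => (c i).2,
        fun j => by simp [Φ, Fin.snoc_castSucc],
        by simp [Φ, Fin.snoc_last]⟩
  have hinj : Function.Injective Φ := by
    intro c c' hcc
    have hee : ∀ x : K, ∑ i : Fin k, ((c i : K) - (c' i : K)) * x ^ (i : ℕ) = 0 := by
      intro x
      have h1 := congrFun hcc (Fin.castSucc (e.symm x))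
      simp only [Φ, Fin.snoc_castSucc, Equiv.apply_symm_apply] at h1
      simp [sub_mul, Finset.sum_sub_distrib, h1]
    by_contra hne
    have hd0 : (fun i => (c i : K) - (c' i : K)) ≠ 0 := by
      intro h0
      apply hne
      funext i
      ext
      have := congrFun h0 i
      simpa [sub_eq_zero] using this
    have hbound := rs_root_bound (fun i => (c i : K) - (c' i : K)) (k - 1)
      (fun i hi => by have := i.isLt; omega) hd0
    rw [Finset.filter_true_of_mem (fun x _ => hee x), Finset.card_univ, hK] at hbound
    omega
  have hcard : Nat.card C = ∏ i, Nat.card (S i) := by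
    rw [hrange, Nat.card_congr (Equiv.ofInjective Φ hinj).symm, Nat.card_pi]
  -- minimum distance lower bound
  have hdist : ∀ v ∈ C, v ≠ 0 → (q ^ h + 1) - (k - 1) ≤ hammingNorm v := by
    rw [hC]
    rintro v ⟨c, hcS, hcv, hcl⟩ hv0
    have hcne : c ≠ 0 := by
      intro h0; apply hv0; funext j
      refine Fin.lastCases ?_ (fun j' => ?_) j
      · simp [hcl, h0]
      · simp [hcv j', h0]
    set Z := Finset.univ.filter (fun j : Fin (q ^ h + 1) => v j = 0) with hZ
    set R := Finset.univ.filter (fun x : K => ∑ i : Fin k, c i * x ^ (i : ℕ) = 0) with hR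
    have hZR : Z ⊆ R.image (fun x => Fin.castSucc (e.symm x)) ∪ {Fin.last (q ^ h)} := by
      intro j hj
      simp only [hZ, Finset.mem_filter, Finset.mem_univ, true_and] at hj
      rcases Fin.eq_castSucc_or_eq_last j with ⟨j', rfl⟩ | rfl
      · apply Finset.mem_union_left
        rw [Finset.mem_image]
        refine ⟨e j', ?_, by simp⟩
        simp only [hR, Finset.mem_filter, Finset.mem_univ, true_and]
        rw [← hcv j']; exact hj
      · exact Finset.mem_union_right _ (Finset.mem_singleton_self _)
    have hZcard : Z.card ≤ k - 1 := by
      by_cases hlast : c ⟨k - 1, by omega⟩ = 0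
      · rcases Nat.lt_or_ge 1 k with hk' | hk'
        · -- k ≥ 2
          have hRcard : R.card ≤ k - 2 := by
            apply rs_root_bound c (k - 2) _ hcne
            intro i hi
            have h2 := i.isLt
            have : i = ⟨k - 1, by omega⟩ := by
              ext
              simp only [Fin.val_mk]
              omega
            rw [this]; exact hlast
          calc Z.card ≤ (R.image (fun x => Fin.castSucc (e.symm x)) ∪ {Fin.last (q ^ h)}).card :=
                Finset.card_le_card hZR
            _ ≤ (R.image (fun x => Fin.castSucc (e.symm x))).card + 1 := by
                apply le_trans (Finset.card_union_le _ _); simp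
            _ ≤ R.card + 1 := by
                have := Finset.card_image_le (s := R) (f := fun x => Fin.castSucc (e.symm x))
                omega
            _ ≤ k - 1 := by omega
        · -- k = 1 : then c = 0, contradiction
          exfalso
          apply hcne
          funext i
          have : i = ⟨k - 1, by omega⟩ := by
            have h2 := i.isLt
            ext
            simp only [Fin.val_mk]
            omega
          rw [this]; exact hlast
      · -- c_{k-1} ≠ 0
        have hRcard : R.card ≤ k - 1 :=
          rs_root_bound c (k - 1) (fun i hi => by have := i.isLt; omega) hcne
        have hZR' : Z ⊆ R.image (fun x => Fin.castSucc (e.symm x)) := by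
          intro j hj
          have hj' := hj
          simp only [hZ, Finset.mem_filter, Finset.mem_univ, true_and] at hj'
          rcases Finset.mem_union.mp (hZR hj) with hmem | hmem
          · exact hmem
          · exfalso
            rw [Finset.mem_singleton] at hmem
            subst hmem
            rw [hcl] at hj'
            exact hlast hj'
        calc Z.card ≤ (R.image (fun x => Fin.castSucc (e.symm x))).card :=
              Finset.card_le_card hZR'
          _ ≤ R.card := Finset.card_image_le
          _ ≤ k - 1 := hRcard
    have hsplit : hammingNorm v + Z.card = q ^ h + 1 := by
      have hfc := Finset.card_filter_add_card_filter_not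
        (s := (Finset.univ : Finset (Fin (q ^ h + 1)))) (p := fun j => v j ≠ 0)
      have h1 : hammingNorm v = (Finset.univ.filter (fun j => v j ≠ 0)).card := rfl
      have h2 : Z = Finset.univ.filter (fun j : Fin (q ^ h + 1) => ¬ v j ≠ 0) := by
        rw [hZ]; congr 1; funext j; simp
      rw [h1, h2]
      simpa using hfc
    omega
  refine ⟨hadd, hcard, hdist, ?_⟩
  -- fractional MDS
  intro hlt1 hlt2 d hdmin hdex
  obtain ⟨v, hvC, hv0, hvd⟩ := hdex
  have hdlb : q ^ h + 1 - (k - 1) ≤ d := hvd ▸ hdist v hvC hv0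
  have hdub : d ≤ q ^ h + 1 := by
    rw [← hvd]
    calc hammingNorm v ≤ Fintype.card (Fin (q ^ h + 1)) := hammingNorm_le_card_fintype
      _ = q ^ h + 1 := Fintype.card_fin _
  have hd1 : 1 ≤ d := by omega
  set m : ℕ := q ^ h + 1 - (d - 1) with hm
  have hmle : m ≤ q ^ h + 1 := Nat.sub_le _ _
  -- Singleton bound via projection
  let ψ : C → (Fin m → K) := fun u j => u.1 ⟨(j : ℕ), lt_of_lt_of_le j.isLt hmle⟩
  have hψinj : Function.Injective ψ := by
    intro u w huw
    ext1
    by_contra hne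
    have husub : u.1 - w.1 ∈ C := hsubc _ u.2 _ w.2
    have hne0 : u.1 - w.1 ≠ 0 := sub_ne_zero.mpr hne
    have hdle := hdmin _ husub hne0
    have hsupp : hammingNorm (u.1 - w.1) ≤ (q ^ h + 1) - m := by
      have hsub2 : (Finset.univ.filter fun j : Fin (q ^ h + 1) => (u.1 - w.1) j ≠ 0)
          ⊆ Finset.univ.filter (fun j : Fin (q ^ h + 1) => m ≤ (j : ℕ)) := by
        intro j hj
        simp only [Finset.mem_filter, Finset.mem_univ, true_and] at hj ⊢
        by_contra hjm
        push_neg at hjm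
        apply hj
        have h3 : u.1 j = w.1 j := congrFun huw ⟨(j : ℕ), hjm⟩
        simp [h3, sub_eq_zero]
      calc hammingNorm (u.1 - w.1)
          ≤ (Finset.univ.filter (fun j : Fin (q ^ h + 1) => m ≤ (j : ℕ))).card :=
            Finset.card_le_card hsub2
        _ ≤ (q ^ h + 1) - m := by
            have := Finset.card_le_card_of_injOn
              (f := fun j : Fin (q ^ h + 1) => (j : ℕ) - m)
              (s := Finset.univ.filter (fun j : Fin (q ^ h + 1) => m ≤ (j : ℕ)))
              (t := Finset.range (q ^ h + 1 - m))
              (fun j hj => by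
                simp only [Finset.mem_coe, Finset.mem_filter, Finset.mem_univ, true_and] at hj
                rw [Finset.mem_coe, Finset.mem_range]
                show (j : ℕ) - m < q ^ h + 1 - m
                have := j.isLt
                omega)
              (fun a ha b hb hab => by
                simp only [Finset.mem_coe, Finset.mem_filter, Finset.mem_univ, true_and] at ha hb
                have := a.isLt; have := b.isLt
                dsimp only at hab
                exact Fin.ext (by omega))
            simpa using this
    omega
  have hcount : q ^ r ≤ q ^ (h * m) := by
    calc q ^ r = Nat.card C := by rw [hcard, hr]
      _ ≤ Nat.card (Fin m → K) := Nat.card_le_card_of_injective ψ hψinj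
      _ = (q ^ h) ^ m := by simp [Nat.card_eq_fintype_card, hK]
      _ = q ^ (h * m) := by rw [pow_mul]
  have hq1 : 1 < q := hq2
  have hr1 : (k - 1) * h < r := (Nat.pow_lt_pow_iff_right hq1).mp hlt1
  have hr2 : r < k * h := (Nat.pow_lt_pow_iff_right hq1).mp hlt2
  have hrm : r ≤ h * m := (Nat.pow_le_pow_iff_right hq1).mp hcount
  have hkm : k - 1 < m := by
    have h4 : (k - 1) * h < m * h := by
      calc (k - 1) * h < r := hr1
        _ ≤ h * m := hrm
        _ = m * h := Nat.mul_comm _ _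
    exact Nat.lt_of_mul_lt_mul_right h4
  have hdeq : d = q ^ h + 2 - k := by omega
  have hceil : ⌈(r : ℚ) / (h : ℚ)⌉ = (k : ℤ) := by
    have hhpos : (0 : ℚ) < (h : ℚ) := by exact_mod_cast hh
    rw [Int.ceil_eq_iff]
    constructor
    · rw [lt_div_iff₀ hhpos]
      have h5 : ((k - 1 : ℕ) : ℚ) * (h : ℚ) < (r : ℚ) := by exact_mod_cast hr1
      rw [Nat.cast_sub hk1] at h5
      push_cast at h5 ⊢
      linarith
    · rw [div_le_iff₀ hhpos]
      have h6 : (r : ℚ) ≤ ((k * h : ℕ) : ℚ) := by exact_mod_cast le_of_lt hr2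
      push_cast at h6 ⊢
      linarith
  rw [hceil]
  have hcast : ((q : ℤ)) ^ h = ((q ^ h : ℕ) : ℤ) := by push_cast; ring
  rw [hcast]
  omega
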